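/- Let q be a real number with 0 < q < 1 and let z be a real number with e^z q < 1. Then the moment generating function of Z_n = n - γ_n^*(1) converges: lim_{n→∞} ∑_{h=1}^n e^{z(n-h)} q^{n-h} ∏_{j=1}^{h-1} (1 - q^{n-j}) = ∏_{ℓ=1}^∞ (1 - q^ℓ)/(1 - e^z q^ℓ). -/

import Mathlib

open Filter Finset Real Topology

namespace MgfAux

variable {q : ℝ}

lemma factor_pos (hq0 : 0 < q) (hq1 : q < 1) {c : ℝ} (hc0 : 0 ≤ c) (hc1 : c < 1) (m : ℕ) :
    0 < 1 - c * q ^ m := by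
  have h1 : q ^ m ≤ 1 := pow_le_one₀ hq0.le hq1.le
  have h2 : 0 ≤ q ^ m := pow_nonneg hq0.le m
  nlinarith

lemma log_summable (hq0 : 0 < q) (hq1 : q < 1) {c : ℝ} (hc0 : 0 ≤ c) (hc1 : c < 1) :
    Summable (fun m : ℕ => Real.log (1 - c * q ^ m)) := by
  apply Summable.of_norm_bounded (g := fun m : ℕ => (c / (1 - c)) * q ^ m)
    (((summable_geometric_of_lt_one hq0.le hq1)).mul_left _)
  intro m
  have h1 : q ^ m ≤ 1 := pow_le_one₀ hq0.le hq1.le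
  have h2 : 0 ≤ q ^ m := pow_nonneg hq0.le m
  have hcq0 : 0 ≤ c * q ^ m := by positivity
  have hcqc : c * q ^ m ≤ c := by nlinarith
  have hpos : 0 < 1 - c * q ^ m := factor_pos hq0 hq1 hc0 hc1 m
  have hlog : Real.log (1 - c * q ^ m) ≤ 0 := Real.log_nonpos (by linarith) (by linarith)
  rw [Real.norm_eq_abs, abs_of_nonpos hlog]
  have hkey : 1 - (1 - c * q ^ m)⁻¹ ≤ Real.log (1 - c * q ^ m) :=
    Real.one_sub_inv_le_log_of_pos hpos
  have hinv : (1 - c * q ^ m)⁻¹ - 1 = (c * q ^ m) / (1 - c * q ^ m) := by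
    field_simp
    ring
  have hfrac : (c * q ^ m) / (1 - c * q ^ m) ≤ (c / (1 - c)) * q ^ m := by
    rw [div_le_iff₀ hpos]
    have : (c / (1 - c)) * q ^ m * (1 - c * q ^ m)
        = (c * q ^ m) * ((1 - c * q ^ m) / (1 - c)) := by ring
    rw [this]
    have h3 : (1 : ℝ) ≤ (1 - c * q ^ m) / (1 - c) := by
      rw [le_div_iff₀ (by linarith)]
      nlinarith
    nlinarith
  linarith

lemma hasProd_one_sub (hq0 : 0 < q) (hq1 : q < 1) {c : ℝ} (hc0 : 0 ≤ c) (hc1 : c < 1) :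
    HasProd (fun m : ℕ => 1 - c * q ^ m)
      (Real.exp (∑' m : ℕ, Real.log (1 - c * q ^ m))) := by
  have h := (log_summable hq0 hq1 hc0 hc1).hasSum.rexp
  have he : (rexp ∘ fun m : ℕ => Real.log (1 - c * q ^ m)) = fun m : ℕ => 1 - c * q ^ m :=
    funext fun m => Real.exp_log (factor_pos hq0 hq1 hc0 hc1 m)
  rwa [he] at h

/-- `A q k = ∏_{m ≥ k+1} (1 - q^m)`. -/
noncomputable def Ak (q : ℝ) (k : ℕ) : ℝ := ∏' m : ℕ, (1 - q ^ (k + 1) * q ^ m)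

lemma qpow_lt_one (hq0 : 0 < q) (hq1 : q < 1) (k : ℕ) : q ^ (k + 1) < 1 :=
  pow_lt_one₀ hq0.le hq1 k.succ_ne_zero

lemma Ak_eq_exp (hq0 : 0 < q) (hq1 : q < 1) (k : ℕ) :
    Ak q k = Real.exp (∑' m : ℕ, Real.log (1 - q ^ (k + 1) * q ^ m)) :=
  (hasProd_one_sub hq0 hq1 (pow_nonneg hq0.le _) (qpow_lt_one hq0 hq1 k)).tprod_eq

lemma Ak_hasProd (hq0 : 0 < q) (hq1 : q < 1) (k : ℕ) :
    HasProd (fun m : ℕ => 1 - q ^ (k + 1) * q ^ m) (Ak q k) := by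
  rw [Ak_eq_exp hq0 hq1 k]
  exact hasProd_one_sub hq0 hq1 (pow_nonneg hq0.le _) (qpow_lt_one hq0 hq1 k)

lemma Ak_pos (hq0 : 0 < q) (hq1 : q < 1) (k : ℕ) : 0 < Ak q k := by
  rw [Ak_eq_exp hq0 hq1 k]; exact Real.exp_pos _

lemma Ak_le_one (hq0 : 0 < q) (hq1 : q < 1) (k : ℕ) : Ak q k ≤ 1 := by
  rw [Ak_eq_exp hq0 hq1 k]
  rw [Real.exp_le_one_iff]
  apply tsum_nonpos
  intro m
  have h1 : q ^ m ≤ 1 := pow_le_one₀ hq0.le hq1.le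
  have h2 : 0 ≤ q ^ m := pow_nonneg hq0.le m
  have h3 : q ^ (k + 1) ≤ 1 := (qpow_lt_one hq0 hq1 k).le
  have h4 : 0 ≤ q ^ (k + 1) := pow_nonneg hq0.le _
  exact Real.log_nonpos (by nlinarith) (by nlinarith)

lemma Ak_rec (hq0 : 0 < q) (hq1 : q < 1) (k : ℕ) :
    Ak q k = (1 - q ^ (k + 1)) * Ak q (k + 1) := by
  have hm : Multipliable (fun m : ℕ => 1 - q ^ (k + 1) * q ^ m) :=
    (Ak_hasProd hq0 hq1 k).multipliable
  have h2 : Multipliable (fun m : ℕ => 1 - q ^ (k + 1) * q ^ (m + 1)) := by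
    have he : (fun m : ℕ => 1 - q ^ (k + 1) * q ^ (m + 1))
        = fun m : ℕ => 1 - q ^ (k + 1 + 1) * q ^ m := by
      funext m; ring
    rw [he]
    exact (Ak_hasProd hq0 hq1 (k + 1)).multipliable
  calc Ak q k = (1 - q ^ (k + 1) * q ^ 0) * ∏' m : ℕ, (1 - q ^ (k + 1) * q ^ (m + 1)) :=
        tprod_eq_zero_mul' h2
    _ = (1 - q ^ (k + 1)) * Ak q (k + 1) := by
        rw [pow_zero, mul_one]
        congr 1
        exact tprod_congr fun m => by ring

/-- `G q x = ∑_{k ≥ 0} x^k A_k`. -/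
noncomputable def Gf (q x : ℝ) : ℝ := ∑' k : ℕ, x ^ k * Ak q k

lemma summable_G (hq0 : 0 < q) (hq1 : q < 1) {x : ℝ} (hx0 : 0 ≤ x) (hx1 : x < 1) :
    Summable (fun k : ℕ => x ^ k * Ak q k) := by
  apply Summable.of_norm_bounded (g := fun k : ℕ => x ^ k)
    (summable_geometric_of_lt_one hx0 hx1)
  intro k
  have hA0 := (Ak_pos hq0 hq1 k).le
  have hA1 := Ak_le_one hq0 hq1 k
  have hxk : (0:ℝ) ≤ x ^ k := pow_nonneg hx0 k
  rw [Real.norm_eq_abs, abs_of_nonneg (mul_nonneg hxk hA0)]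
  nlinarith


lemma G_funeq (hq0 : 0 < q) (hq1 : q < 1) {y : ℝ} (hy0 : 0 ≤ y) (hy1 : y < 1) :
    Gf q (q * y) = (1 - y) * Gf q y := by
  have hqy0 : 0 ≤ q * y := by positivity
  have hqy1 : q * y < 1 := by nlinarith
  have hsy := summable_G hq0 hq1 hy0 hy1
  have hsqy := summable_G hq0 hq1 hqy0 hqy1
  have h1 : ∑' k : ℕ, (y ^ k * Ak q k - (q * y) ^ k * Ak q k) = Gf q y - Gf q (q * y) :=
    hsy.tsum_sub hsqy
  have hg : ∀ k : ℕ, y ^ k * Ak q k - (q * y) ^ k * Ak q k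
      = y ^ k * (1 - q ^ k) * Ak q k := fun k => by rw [mul_pow]; ring
  have hsg : Summable (fun k : ℕ => y ^ k * (1 - q ^ k) * Ak q k) :=
    (hsy.sub hsqy).congr hg
  have h2 : ∑' k : ℕ, (y ^ k * Ak q k - (q * y) ^ k * Ak q k)
      = ∑' k : ℕ, y ^ k * (1 - q ^ k) * Ak q k := tsum_congr hg
  have h3 : ∑' k : ℕ, y ^ k * (1 - q ^ k) * Ak q k = y * Gf q y := by
    rw [hsg.tsum_eq_zero_add]
    simp only [pow_zero, sub_self, one_mul, mul_zero, zero_mul, zero_add]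
    have h4 : ∀ k : ℕ, y ^ (k + 1) * (1 - q ^ (k + 1)) * Ak q (k + 1)
        = y * (y ^ k * Ak q k) := by
      intro k
      rw [Ak_rec hq0 hq1 k, pow_succ]
      ring
    rw [tsum_congr h4, tsum_mul_left]
    rfl
  have : Gf q y - Gf q (q * y) = y * Gf q y := by rw [← h1, h2, h3]
  linarith

lemma G_iter (hq0 : 0 < q) (hq1 : q < 1) {x : ℝ} (hx0 : 0 ≤ x) (hx1 : x < 1) (n : ℕ) :
    Gf q (q ^ n * x) = Gf q x * ∏ l ∈ range n, (1 - x * q ^ l) := by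
  induction n with
  | zero => simp
  | succ n ih =>
    have hy0 : 0 ≤ q ^ n * x := by positivity
    have hy1 : q ^ n * x < 1 := by
      have h1 : q ^ n ≤ 1 := pow_le_one₀ hq0.le hq1.le
      have h2 : 0 ≤ q ^ n := pow_nonneg hq0.le n
      nlinarith
    have he : q ^ (n + 1) * x = q * (q ^ n * x) := by ring
    rw [he, G_funeq hq0 hq1 hy0 hy1, ih, prod_range_succ]
    ring

lemma G_sub_bound (hq0 : 0 < q) (hq1 : q < 1) {y : ℝ} (hy0 : 0 ≤ y) (hy1 : y < 1) :
    |Gf q y - Ak q 0| ≤ y / (1 - y) := by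
  have hs := summable_G hq0 hq1 hy0 hy1
  have h1 : Gf q y = y ^ 0 * Ak q 0 + ∑' k : ℕ, y ^ (k + 1) * Ak q (k + 1) :=
    hs.tsum_eq_zero_add
  rw [pow_zero, one_mul] at h1
  have hss : Summable (fun k : ℕ => y ^ (k + 1) * Ak q (k + 1)) :=
    (summable_nat_add_iff 1).2 hs
  have h2 : |∑' k : ℕ, y ^ (k + 1) * Ak q (k + 1)| ≤ ∑' k : ℕ, y * y ^ k := by
    have hsb : Summable (fun k : ℕ => y * y ^ k) :=
      (summable_geometric_of_lt_one hy0 hy1).mul_left y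
    rw [← Real.norm_eq_abs]
    refine (norm_tsum_le_tsum_norm hss.norm).trans ?_
    refine Summable.tsum_le_tsum ?_ hss.norm hsb
    intro k
    rw [Real.norm_eq_abs]
    have hA0 := (Ak_pos hq0 hq1 (k + 1)).le
    have hA1 := Ak_le_one hq0 hq1 (k + 1)
    have hyk : (0:ℝ) ≤ y ^ (k + 1) := pow_nonneg hy0 _
    rw [abs_of_nonneg (mul_nonneg hyk hA0), pow_succ]
    nlinarith [mul_nonneg (mul_nonneg hy0 (pow_nonneg hy0 k)) (sub_nonneg.2 hA1)]
  have h3 : ∑' k : ℕ, y * y ^ k = y * (1 - y)⁻¹ := by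
    rw [tsum_mul_left, tsum_geometric_of_lt_one hy0 hy1]
  rw [h1]
  simp only [add_sub_cancel_left]
  rw [h3] at h2
  rw [div_eq_mul_inv]
  exact h2


lemma G_eval (hq0 : 0 < q) (hq1 : q < 1) {x : ℝ} (hx0 : 0 ≤ x) (hx1 : x < 1) :
    Gf q x * Real.exp (∑' l : ℕ, Real.log (1 - x * q ^ l)) = Ak q 0 := by
  set P := Real.exp (∑' l : ℕ, Real.log (1 - x * q ^ l)) with hPdef
  have hP : HasProd (fun l : ℕ => 1 - x * q ^ l) P := hasProd_one_sub hq0 hq1 hx0 hx1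
  have h1 : Tendsto (fun n : ℕ => Gf q x * ∏ l ∈ range n, (1 - x * q ^ l)) atTop
      (𝓝 (Gf q x * P)) := hP.tendsto_prod_nat.const_mul _
  have h2 : Tendsto (fun n : ℕ => Gf q x * ∏ l ∈ range n, (1 - x * q ^ l)) atTop
      (𝓝 (Ak q 0)) := by
    have he : (fun n : ℕ => Gf q x * ∏ l ∈ range n, (1 - x * q ^ l))
        = fun n : ℕ => Gf q (q ^ n * x) :=
      funext fun n => (G_iter hq0 hq1 hx0 hx1 n).symm
    rw [he, ← tendsto_sub_nhds_zero_iff]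
    apply squeeze_zero_norm (a := fun n : ℕ => (x / (1 - x)) * q ^ n)
    · intro n
      have hqn1 : q ^ n ≤ 1 := pow_le_one₀ hq0.le hq1.le
      have hqn0 : 0 ≤ q ^ n := pow_nonneg hq0.le n
      have hy0 : 0 ≤ q ^ n * x := by positivity
      have hy1 : q ^ n * x < 1 := by nlinarith
      have hb := G_sub_bound hq0 hq1 hy0 hy1
      have hb2 : q ^ n * x / (1 - q ^ n * x) ≤ q ^ n * x / (1 - x) := by
        gcongr
        · nlinarith
      rw [Real.norm_eq_abs]
      calc |Gf q (q ^ n * x) - Ak q 0| ≤ q ^ n * x / (1 - q ^ n * x) := hb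
        _ ≤ q ^ n * x / (1 - x) := hb2
        _ = x / (1 - x) * q ^ n := by ring
    · have := (tendsto_pow_atTop_nhds_zero_of_lt_one hq0.le hq1).const_mul (x / (1 - x))
      simpa using this
  exact tendsto_nhds_unique h1 h2

lemma tprod_ratio (hq0 : 0 < q) (hq1 : q < 1) {x : ℝ} (hx0 : 0 ≤ x) (hx1 : x < 1) :
    ∏' l : ℕ, (1 - q * q ^ l) / (1 - x * q ^ l)
      = Ak q 0 * (Real.exp (∑' l : ℕ, Real.log (1 - x * q ^ l)))⁻¹ := by
  have hN := log_summable hq0 hq1 hq0.le hq1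
  have hD := log_summable hq0 hq1 hx0 hx1
  have h := (hN.hasSum.sub hD.hasSum).rexp
  have he : (rexp ∘ fun l : ℕ => Real.log (1 - q * q ^ l) - Real.log (1 - x * q ^ l))
      = fun l : ℕ => (1 - q * q ^ l) / (1 - x * q ^ l) := by
    funext l
    rw [Function.comp_apply, Real.exp_sub, Real.exp_log (factor_pos hq0 hq1 hq0.le hq1 l),
      Real.exp_log (factor_pos hq0 hq1 hx0 hx1 l)]
  rw [he] at h
  rw [h.tprod_eq, Real.exp_sub, div_eq_mul_inv]
  congr 2
  rw [Ak_eq_exp hq0 hq1 0]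
  norm_num

end MgfAux


open MgfAux

/-- For `0 < q < 1` and real `z` with `e^z q < 1`, the moment generating function of
`Z_n = n - γ_n^*(1)` converges:
`lim_{n→∞} ∑_{h=1}^n e^{z(n-h)} q^{n-h} ∏_{j=1}^{h-1} (1 - q^{n-j})
  = ∏_{ℓ=1}^∞ (1 - q^ℓ)/(1 - e^z q^ℓ)`. -/
theorem mgf_limit (q z : ℝ) (hq0 : 0 < q) (hq1 : q < 1) (hz : Real.exp z * q < 1) :
    Filter.Tendsto
      (fun n : ℕ => ∑ h ∈ Finset.Icc 1 n, Real.exp (z * ((n - h : ℕ) : ℝ)) * q ^ (n - h) *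
        ∏ j ∈ Finset.Icc 1 (h - 1), (1 - q ^ (n - j)))
      Filter.atTop
      (nhds (∏' l : ℕ, (1 - q ^ (l + 1)) / (1 - Real.exp z * q ^ (l + 1)))) := by
  set x := Real.exp z * q with hxdef
  have hx0 : 0 ≤ x := by positivity
  have hx1 : x < 1 := hz
  -- Step 1: identify the limit with `Gf q x`
  have hTarget : (∏' l : ℕ, (1 - q ^ (l + 1)) / (1 - Real.exp z * q ^ (l + 1)))
      = Gf q x := by
    have h1 : (fun l : ℕ => (1 - q ^ (l + 1)) / (1 - Real.exp z * q ^ (l + 1)))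
        = fun l : ℕ => (1 - q * q ^ l) / (1 - x * q ^ l) := by
      funext l
      rw [pow_succ', hxdef]
      ring_nf
    rw [h1, tprod_ratio hq0 hq1 hx0 hx1]
    have h2 := G_eval hq0 hq1 hx0 hx1
    rw [← h2, mul_inv_cancel_right₀ (Real.exp_ne_zero _)]
  rw [hTarget]
  -- Step 2: rewrite the partial sums
  set F : ℕ → ℕ → ℝ := fun n k =>
    if k < n then x ^ k * ∏ i ∈ Finset.range (n - (k + 1)), (1 - q ^ (k + 1) * q ^ i) else 0
    with hFdef
  have hS : ∀ n : ℕ, (∑ h ∈ Finset.Icc 1 n, Real.exp (z * ((n - h : ℕ) : ℝ)) * q ^ (n - h) *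
        ∏ j ∈ Finset.Icc 1 (h - 1), (1 - q ^ (n - j))) = ∑' k : ℕ, F n k := by
    intro n
    have e1 : (∑ h ∈ Finset.Icc 1 n, Real.exp (z * ((n - h : ℕ) : ℝ)) * q ^ (n - h) *
        ∏ j ∈ Finset.Icc 1 (h - 1), (1 - q ^ (n - j)))
        = ∑ k ∈ Finset.range n,
            x ^ k * ∏ i ∈ Finset.range (n - (k + 1)), (1 - q ^ (k + 1) * q ^ i) := by
      refine Finset.sum_nbij' (fun h => n - h) (fun k => n - k) ?_ ?_ ?_ ?_ ?_
      · intro h hh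
        rw [Finset.mem_Icc] at hh
        rw [Finset.mem_range]
        beta_reduce
        omega
      · intro k hk
        rw [Finset.mem_range] at hk
        rw [Finset.mem_Icc]
        beta_reduce
        omega
      · intro h hh
        rw [Finset.mem_Icc] at hh
        beta_reduce
        omega
      · intro k hk
        rw [Finset.mem_range] at hk
        beta_reduce
        omega
      · intro h hh
        rw [Finset.mem_Icc] at hh
        beta_reduce
        have hexp : Real.exp (z * ((n - h : ℕ) : ℝ)) * q ^ (n - h) = x ^ (n - h) := by
          rw [mul_comm z ((n - h : ℕ) : ℝ), Real.exp_nat_mul, hxdef, mul_pow]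
        rw [hexp]
        congr 1
        refine Finset.prod_nbij' (fun j => n - j - (n - h + 1)) (fun i => n - (n - h + 1 + i))
          ?_ ?_ ?_ ?_ ?_
        · intro j hj
          rw [Finset.mem_Icc] at hj
          rw [Finset.mem_range]
          beta_reduce
          omega
        · intro i hi
          rw [Finset.mem_range] at hi
          rw [Finset.mem_Icc]
          beta_reduce
          omega
        · intro j hj
          rw [Finset.mem_Icc] at hj
          beta_reduce
          omega
        · intro i hi
          rw [Finset.mem_range] at hi
          beta_reduce
          omega
        · intro j hj
          rw [Finset.mem_Icc] at hj
          beta_reduce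
          congr 1
          rw [← pow_add]
          congr 1
          beta_reduce
          omega
    rw [e1]
    have e2 : ∀ k ∈ Finset.range n,
        x ^ k * ∏ i ∈ Finset.range (n - (k + 1)), (1 - q ^ (k + 1) * q ^ i) = F n k := by
      intro k hk
      rw [Finset.mem_range] at hk
      simp only [hFdef]
      rw [if_pos hk]
    rw [Finset.sum_congr rfl e2]
    refine (tsum_eq_sum ?_).symm
    intro k hk
    rw [Finset.mem_range, not_lt] at hk
    simp only [hFdef, if_neg (show ¬ k < n by omega)]
  -- Step 3: dominated convergence
  have hmain : Filter.Tendsto (fun n : ℕ => ∑' k : ℕ, F n k) Filter.atTop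
      (𝓝 (∑' k : ℕ, x ^ k * Ak q k)) := by
    apply tendsto_tsum_of_dominated_convergence
      (bound := fun k : ℕ => x ^ k) (summable_geometric_of_lt_one hx0 hx1)
    · intro k
      have hbase : Filter.Tendsto
          (fun n : ℕ => x ^ k * ∏ i ∈ Finset.range (n - (k + 1)), (1 - q ^ (k + 1) * q ^ i))
          Filter.atTop (𝓝 (x ^ k * Ak q k)) :=
        (((Ak_hasProd hq0 hq1 k).tendsto_prod_nat).comp (tendsto_sub_atTop_nat (k + 1))).const_mul _
      refine hbase.congr' ?_
      filter_upwards [eventually_ge_atTop (k + 1)] with n hn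
      simp only [hFdef]
      rw [if_pos (by omega)]
    · filter_upwards with n
      intro k
      simp only [hFdef]
      by_cases hk : k < n
      · rw [if_pos hk, Real.norm_eq_abs]
        have hprod0 : (0:ℝ) ≤ ∏ i ∈ Finset.range (n - (k + 1)), (1 - q ^ (k + 1) * q ^ i) :=
          Finset.prod_nonneg fun i _ =>
            (factor_pos hq0 hq1 (pow_nonneg hq0.le _) (qpow_lt_one hq0 hq1 k) i).le
        have hprod1 : (∏ i ∈ Finset.range (n - (k + 1)), (1 - q ^ (k + 1) * q ^ i)) ≤ 1 :=
          Finset.prod_le_one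
            (fun i _ => (factor_pos hq0 hq1 (pow_nonneg hq0.le _) (qpow_lt_one hq0 hq1 k) i).le)
            (fun i _ => by
              have h1 : 0 ≤ q ^ (k + 1) * q ^ i := by positivity
              linarith)
        have hxk : (0:ℝ) ≤ x ^ k := pow_nonneg hx0 k
        rw [abs_of_nonneg (mul_nonneg hxk hprod0)]
        nlinarith
      · rw [if_neg hk]
        simp [pow_nonneg hx0 k]
  refine hmain.congr ?_
  intro n
  exact (hS n).symm
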